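/- If X is an isotropic random vector in R^n (n ≥ 2) with finite fourth moments, then Λ(X) ≥ (n−1)/n. -/

import Mathlib

open MeasureTheory ProbabilityTheory Real
open scoped RealInnerProductSpace ENNReal Pointwise

noncomputable section

/-- The uniform (normalized rotation-invariant) probability measure `σ_{n-1}`
on the unit sphere `S^{n-1} ⊆ ℝⁿ`. -/
def sphereUniform (n : ℕ) : Measure (Metric.sphere (0 : EuclideanSpace ℝ (Fin n)) 1) :=
  ((volume : Measure (EuclideanSpace ℝ (Fin n))).toSphere Set.univ)⁻¹ •
    (volume : Measure (EuclideanSpace ℝ (Fin n))).toSphere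

/-- The standard normal distribution function `Φ`. -/
def stdNormalCDF (x : ℝ) : ℝ := ((gaussianReal 0 1) (Set.Iic x)).toReal

/-- The Kolmogorov distance `ρ(F,G) = sup_x |F(x) − G(x)|`. -/
def kolmogorovDist (F G : ℝ → ℝ) : ℝ := ⨆ x : ℝ, |F x - G x|

variable {Ω : Type*} [MeasurableSpace Ω] {n : ℕ}

/-- The distribution function of a real random variable `S` on `(Ω, μ)`. -/
def cdfOf (μ : Measure Ω) (S : Ω → ℝ) (x : ℝ) : ℝ := (μ {ω | S ω ≤ x}).toReal

/-- `X` is isotropic: the components have mean zero and identity covariance. -/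
def IsIsotropic (μ : Measure Ω) (X : Ω → EuclideanSpace ℝ (Fin n)) : Prop :=
  (∀ i, ∫ ω, X ω i ∂μ = 0) ∧
    ∀ i j, ∫ ω, X ω i * X ω j ∂μ = if i = j then (1 : ℝ) else 0

/-- The set of admissible constants `Λ` in the second order correlation condition
`Var(Σ_{i,j} a_{ij} X_i X_j) ≤ Λ Σ_{i,j} a_{ij}²`. -/
def corrSet (μ : Measure Ω) (X : Ω → EuclideanSpace ℝ (Fin n)) : Set ℝ :=
  {L | 0 ≤ L ∧ ∀ a : Fin n → Fin n → ℝ,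
    variance (fun ω => ∑ i, ∑ j, a i j * (X ω i * X ω j)) μ ≤ L * ∑ i, ∑ j, (a i j) ^ 2}

/-- `Λ(X)`: the smallest constant in the second order correlation condition. -/
def corrConst (μ : Measure Ω) (X : Ω → EuclideanSpace ℝ (Fin n)) : ℝ := sInf (corrSet μ X)

/-- `σ₄²(X) = Var(|X|²)/n`. -/
def sigma4sq (μ : Measure Ω) (X : Ω → EuclideanSpace ℝ (Fin n)) : ℝ :=
  (1 / (n : ℝ)) * variance (fun ω => ‖X ω‖ ^ 2) μ

/-- If `X` is an isotropic random vector in `ℝⁿ` (`n ≥ 2`) with finite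
fourth moments, then `Λ(X) ≥ (n−1)/n`. -/
theorem statement4 {Ω : Type*} [MeasurableSpace Ω] (μ : Measure Ω) [IsProbabilityMeasure μ]
    {n : ℕ} (hn : 2 ≤ n) (X : Ω → EuclideanSpace ℝ (Fin n)) (hX : Measurable X)
    (h4 : Integrable (fun ω => ‖X ω‖ ^ 4) μ)
    (hiso : IsIsotropic μ X) :
    ((n : ℝ) - 1) / n ≤ corrConst μ X := by
  classical
  have hnpos : (0:ℝ) < n := by positivity
  have hXm : ∀ i, Measurable fun ω => X ω i := fun i => (measurable_pi_apply i).comp ((WithLp.measurable_ofLp 2 _).comp hX)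
  have hnorm2 : ∀ ω, ‖X ω‖ ^ 2 = ∑ i, (X ω i) ^ 2 := by
    intro ω
    rw [EuclideanSpace.norm_eq, sq_sqrt (by positivity)]
    simp [sq_abs]
  have hnorm4 : ∀ ω, ‖X ω‖ ^ 4 = ∑ i, ∑ j, (X ω i)^2 * (X ω j)^2 := by
    intro ω
    have : ‖X ω‖ ^ 4 = (‖X ω‖^2) * (‖X ω‖^2) := by ring
    rw [this, hnorm2, Finset.sum_mul_sum]
  have hcoordsq : ∀ i ω, (X ω i) ^ 2 ≤ ‖X ω‖ ^ 2 := by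
    intro i ω
    rw [hnorm2]
    exact Finset.single_le_sum (f := fun i => (X ω i)^2) (fun i _ => sq_nonneg _)
      (Finset.mem_univ i)
  have hprodbound : ∀ i j ω, (X ω i)^2 * (X ω j)^2 ≤ ‖X ω‖ ^ 4 := by
    intro i j ω
    calc (X ω i)^2 * (X ω j)^2
        ≤ ‖X ω‖^2 * ‖X ω‖^2 :=
          mul_le_mul (hcoordsq i ω) (hcoordsq j ω) (sq_nonneg _) (by positivity)
    _ = ‖X ω‖ ^ 4 := by ring
  have hint4 : ∀ i j, Integrable (fun ω => (X ω i)^2 * (X ω j)^2) μ := by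
    intro i j
    refine h4.mono' (((hXm i).pow_const 2).mul ((hXm j).pow_const 2)).aestronglyMeasurable ?_
    filter_upwards with ω
    rw [Real.norm_eq_abs, abs_of_nonneg (by positivity)]
    exact hprodbound i j ω
  have hmem : ∀ i j, MemLp (fun ω => X ω i * X ω j) 2 μ := by
    intro i j
    rw [memLp_two_iff_integrable_sq (f := fun ω => X ω i * X ω j) (((hXm i).mul (hXm j)).aestronglyMeasurable)]
    simpa [mul_pow] using hint4 i j
  have hint2 : ∀ i j, Integrable (fun ω => X ω i * X ω j) μ := fun i j =>
    (hmem i j).integrable (by norm_num)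
  have hvar : ∀ g : Ω → ℝ, MemLp g 2 μ →
      variance g μ = (∫ ω, (g ω)^2 ∂μ) - (∫ ω, g ω ∂μ)^2 := by
    intro g hg
    simpa [Pi.pow_apply] using variance_eq_sub hg
  set M : Fin n → Fin n → ℝ := fun i j => ∫ ω, (X ω i)^2 * (X ω j)^2 ∂μ with hM
  have hMsymm : ∀ i j, (∫ ω, (X ω i * X ω j)^2 ∂μ) = M i j := by
    intro i j; simp only [hM]; congr 1; funext ω; ring
  have hm1 : ∀ i, (∫ ω, (X ω i)^2 ∂μ) = 1 := by
    intro i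
    have h : ∫ ω, X ω i * X ω i ∂μ = 1 := by simpa using hiso.2 i i
    rw [← h]; congr 1; funext ω; ring
  have fact3 : ∀ i, 1 ≤ M i i := by
    intro i
    have h0 : 0 ≤ variance (fun ω => X ω i * X ω i) μ := variance_nonneg _ _
    rw [hvar _ (hmem i i), hMsymm i i] at h0
    have h : ∫ ω, X ω i * X ω i ∂μ = 1 := by simpa using hiso.2 i i
    rw [h] at h0
    linarith
  have hmean2 : (∫ ω, ‖X ω‖^2 ∂μ) = n := by
    have h1 : (∫ ω, ‖X ω‖^2 ∂μ) = ∑ i, ∫ ω, (X ω i)^2 ∂μ := by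
      rw [← integral_finset_sum]
      · congr 1; funext ω; exact hnorm2 ω
      · intro i _
        simpa [pow_two] using hint2 i i
    rw [h1]
    simp [hm1]
  have hintsq : ∀ i, Integrable (fun ω => (X ω i)^2) μ := by
    intro i
    simpa [pow_two] using hint2 i i
  have hmemnorm : MemLp (fun ω => ‖X ω‖^2) 2 μ := by
    rw [memLp_two_iff_integrable_sq ((hX.norm.pow_const 2).aestronglyMeasurable)]
    simpa [← pow_mul] using h4
  have hPsum : (∑ i, ∑ j, M i j) = ∫ ω, ‖X ω‖^4 ∂μ := by
    have e1 : ∀ i : Fin n, (∑ j, M i j) = ∫ ω, ∑ j, (X ω i)^2 * (X ω j)^2 ∂μ := by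
      intro i
      rw [integral_finset_sum _ (fun j _ => hint4 i j)]
    rw [Finset.sum_congr rfl (fun i _ => e1 i),
      ← integral_finset_sum _ (fun i _ => integrable_finset_sum _ (fun j _ => hint4 i j))]
    congr 1; funext ω; exact (hnorm4 ω).symm
  have fact4 : (n:ℝ)^2 ≤ ∑ i, ∑ j, M i j := by
    have h0 : 0 ≤ variance (fun ω => ‖X ω‖^2) μ := variance_nonneg _ _
    rw [hvar _ hmemnorm, hmean2] at h0
    have : (∫ ω, (‖X ω‖^2)^2 ∂μ) = ∫ ω, ‖X ω‖^4 ∂μ := by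
      congr 1; funext ω; ring
    rw [this, ← hPsum] at h0
    linarith
  -- row sum helper
  have rowsum : ∀ (g : Fin n → ℝ) (i : Fin n),
      (∑ j, (if i = j then (0:ℝ) else g j)) = (∑ j, g j) - g i := by
    intro g i
    have h : ∀ j : Fin n, (if i = j then (0:ℝ) else g j) = g j - (if i = j then g j else 0) := by
      intro j; by_cases h : i = j <;> simp [h]
    simp_rw [h]
    rw [Finset.sum_sub_distrib, Finset.sum_ite_eq]
    simp
  -- any member of corrSet is ≥ 1
  have key : ∀ L ∈ corrSet μ X, (1:ℝ) ≤ L := by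
    intro L hL
    obtain ⟨hL0, hLa⟩ := hL
    have fact1 : ∀ i j : Fin n, i ≠ j → 2 * M i j ≤ L := by
      intro i j hij
      set a : Fin n → Fin n → ℝ :=
        fun k l => (if k = i ∧ l = j then 1 else 0) + (if k = j ∧ l = i then 1 else 0) with ha
      have hQ : (fun ω => ∑ k, ∑ l, a k l * (X ω k * X ω l))
          = fun ω => 2 * (X ω i * X ω j) := by
        funext ω
        simp [ha, add_mul, Finset.sum_add_distrib, ite_and, ite_mul]
        ring
      have hsq : (∑ k, ∑ l, (a k l)^2) = 2 := by
        simp [ha, ite_and, add_sq, mul_ite, ite_mul, Finset.sum_add_distrib, hij, hij.symm]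
        norm_num
      have h := hLa a
      rw [hQ, hsq, hvar _ ((hmem i j).const_mul 2)] at h
      have e1 : (∫ ω, (2 * (X ω i * X ω j))^2 ∂μ) = 4 * M i j := by
        rw [← hMsymm i j, ← integral_const_mul]; congr 1; funext ω; ring
      have e2 : (∫ ω, 2 * (X ω i * X ω j) ∂μ) = 0 := by
        rw [integral_const_mul, hiso.2 i j, if_neg hij, mul_zero]
      rw [e1, e2] at h
      linarith
    have fact2 : ∀ i j : Fin n, i ≠ j → M i i + M j j - 2 * M i j ≤ 2 * L := by
      intro i j hij
      set a : Fin n → Fin n → ℝ :=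
        fun k l => (if k = i ∧ l = i then 1 else 0) - (if k = j ∧ l = j then 1 else 0) with ha
      have hQ : (fun ω => ∑ k, ∑ l, a k l * (X ω k * X ω l))
          = fun ω => X ω i * X ω i - X ω j * X ω j := by
        funext ω
        simp [ha, sub_mul, Finset.sum_sub_distrib, ite_and, ite_mul]
      have hsq : (∑ k, ∑ l, (a k l)^2) = 2 := by
        simp [ha, ite_and, sub_sq, mul_ite, ite_mul, Finset.sum_add_distrib,
          Finset.sum_sub_distrib, hij, hij.symm]
        norm_num
      have h := hLa a
      rw [hQ, hsq, hvar (fun ω => X ω i * X ω i - X ω j * X ω j)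
        (by exact (hmem i i).sub (hmem j j))] at h
      have e1 : (∫ ω, (X ω i * X ω i - X ω j * X ω j)^2 ∂μ)
          = M i i - 2 * M i j + M j j := by
        have hrw : (fun ω => (X ω i * X ω i - X ω j * X ω j)^2)
            = fun ω => ((X ω i)^2 * (X ω i)^2 - 2 * ((X ω i)^2 * (X ω j)^2))
                + (X ω j)^2 * (X ω j)^2 := by
          funext ω; ring
        rw [hrw, integral_add (by exact (hint4 i i).sub ((hint4 i j).const_mul 2)) (hint4 j j),
          integral_sub (hint4 i i) (by exact (hint4 i j).const_mul 2), integral_const_mul]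
      have e2 : (∫ ω, (X ω i * X ω i - X ω j * X ω j) ∂μ) = 0 := by
        rw [integral_sub (hint2 i i) (hint2 j j)]
        have h1 : ∫ ω, X ω i * X ω i ∂μ = 1 := by simpa using hiso.2 i i
        have h2 : ∫ ω, X ω j * X ω j ∂μ = 1 := by simpa using hiso.2 j j
        rw [h1, h2, sub_self]
      rw [e1, e2] at h
      linarith
    have pair : ∀ i j : Fin n, i ≠ j → M i i + M j j + 2 * M i j ≤ 4 * L := by
      intro i j h
      have h1 := fact1 i j h
      have h2 := fact2 i j h
      linarith
    set T := ∑ i, M i i with hT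
    set P := ∑ i, ∑ j, M i j with hP
    have hstep : (∑ i, ∑ j, (if i = j then (0:ℝ) else M i i + M j j + 2 * M i j))
        ≤ ∑ i : Fin n, ∑ j : Fin n, (if i = j then (0:ℝ) else 4 * L) := by
      refine Finset.sum_le_sum fun i _ => Finset.sum_le_sum fun j _ => ?_
      by_cases h : i = j
      · simp [h]
      · simp only [if_neg h]; exact pair i j h
    have inner : ∀ i : Fin n, (∑ j, (M i i + M j j + 2 * M i j))
        = n * M i i + T + 2 * ∑ j, M i j := by
      intro i
      rw [Finset.sum_add_distrib, Finset.sum_add_distrib, Finset.sum_const, ← Finset.mul_sum]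
      simp [hT, mul_comm]
    have hLHS : (∑ i, ∑ j, (if i = j then (0:ℝ) else M i i + M j j + 2 * M i j))
        = 2 * n * T + 2 * P - 4 * T := by
      have h1 : ∀ i : Fin n, (∑ j, (if i = j then (0:ℝ) else M i i + M j j + 2 * M i j))
          = n * M i i + T + 2 * (∑ j, M i j) - 4 * M i i := by
        intro i
        rw [rowsum (fun j => M i i + M j j + 2 * M i j) i, inner i]
        ring
      rw [Finset.sum_congr rfl fun i _ => h1 i]
      rw [Finset.sum_sub_distrib, Finset.sum_add_distrib, Finset.sum_add_distrib,
        ← Finset.mul_sum, ← Finset.mul_sum, ← Finset.mul_sum, Finset.sum_const]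
      simp [hT, hP]
      ring
    have hRHS : (∑ i : Fin n, ∑ j : Fin n, (if i = j then (0:ℝ) else 4 * L))
        = 4 * L * n * (n - 1) := by
      have h1 : ∀ i : Fin n, (∑ j : Fin n, (if i = j then (0:ℝ) else 4 * L))
          = n * (4 * L) - 4 * L := by
        intro i
        rw [rowsum (fun _ => 4 * L) i, Finset.sum_const]
        simp
      rw [Finset.sum_congr rfl fun i _ => h1 i, Finset.sum_const]
      simp
      ring
    rw [hLHS, hRHS] at hstep
    have hTn : (n:ℝ) ≤ T := by
      calc (n:ℝ) = ∑ _i : Fin n, (1:ℝ) := by simp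
      _ ≤ T := Finset.sum_le_sum fun i _ => fact3 i
    have hn2 : (2:ℝ) ≤ n := by exact_mod_cast hn
    nlinarith [mul_nonneg (by linarith : (0:ℝ) ≤ 2*(n:ℝ) - 4) (by linarith : (0:ℝ) ≤ T - n),
      mul_pos hnpos (by linarith : (0:ℝ) < (n:ℝ) - 1), fact4]
  -- corrSet is nonempty
  have hmemL : (∫ ω, ‖X ω‖^4 ∂μ) ∈ corrSet μ X := by
    refine ⟨integral_nonneg fun ω => by positivity, fun a => ?_⟩
    have hQmem : MemLp (fun ω => ∑ i, ∑ j, a i j * (X ω i * X ω j)) 2 μ := by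
      refine memLp_finset_sum _ fun i _ => memLp_finset_sum _ fun j _ => ?_
      exact (hmem i j).const_mul (a i j)
    rw [hvar _ hQmem]
    have hcs : ∀ ω, (∑ i, ∑ j, a i j * (X ω i * X ω j))^2
        ≤ (∑ i, ∑ j, (a i j)^2) * ‖X ω‖^4 := by
      intro ω
      have h := Finset.sum_mul_sq_le_sq_mul_sq (Finset.univ ×ˢ Finset.univ)
        (fun p => a p.1 p.2) (fun p => X ω p.1 * X ω p.2)
      rw [Finset.sum_product, Finset.sum_product, Finset.sum_product] at h
      calc (∑ i, ∑ j, a i j * (X ω i * X ω j))^2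
          ≤ (∑ i, ∑ j, (a i j)^2) * (∑ i, ∑ j, (X ω i * X ω j)^2) := h
      _ = (∑ i, ∑ j, (a i j)^2) * ‖X ω‖^4 := by
          rw [hnorm4 ω]; congr 1
          exact Finset.sum_congr rfl fun i _ => Finset.sum_congr rfl fun j _ => by ring
    have hintQ : (∫ ω, (∑ i, ∑ j, a i j * (X ω i * X ω j))^2 ∂μ)
        ≤ (∑ i, ∑ j, (a i j)^2) * ∫ ω, ‖X ω‖^4 ∂μ := by
      rw [← integral_const_mul]
      refine integral_mono_of_nonneg (Filter.Eventually.of_forall fun ω => sq_nonneg _)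
        (h4.const_mul _) (Filter.Eventually.of_forall fun ω => hcs ω)
    have := sq_nonneg (∫ ω, (∑ i, ∑ j, a i j * (X ω i * X ω j)) ∂μ)
    calc (∫ ω, (∑ i, ∑ j, a i j * (X ω i * X ω j))^2 ∂μ)
            - (∫ ω, (∑ i, ∑ j, a i j * (X ω i * X ω j)) ∂μ)^2
        ≤ (∫ ω, (∑ i, ∑ j, a i j * (X ω i * X ω j))^2 ∂μ) := by linarith
      _ ≤ (∑ i, ∑ j, (a i j)^2) * ∫ ω, ‖X ω‖^4 ∂μ := hintQ
      _ = (∫ ω, ‖X ω‖^4 ∂μ) * ∑ i, ∑ j, (a i j)^2 := mul_comm _ _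
  -- conclude
  have hne : (corrSet μ X).Nonempty := ⟨_, hmemL⟩
  have h1 : ((n:ℝ) - 1) / n ≤ 1 := by
    rw [div_le_one hnpos]; linarith
  refine h1.trans (le_csInf hne fun b hb => key b hb)
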